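/- Let 0 ≤ δ < M, ε > 0, γ̃ > 0, and let μ₀ ≥ 1 be an integer with 2 + 2ε − (M−δ)/μ₀ > 0. Let J ⊂ ℝ be a compact interval, let 𝒞 := {ρ(cos φ, sin φ) : ρ > 0, φ ∈ J}, and let ω : 𝒞 → ℝ² be positively homogeneous of degree M. Assume there exists C₁ > 0 such that for every k ∈ ℤ² \ {0} and every γ' > 0, the one-dimensional Lebesgue measure of {φ ∈ J : |ω(cos φ, sin φ)·k| ≤ γ'‖k‖} is at most C₁ (γ')^{1/μ₀}. Then there exist C₂ > 0 and R₀ > 1 such that for all R ≥ R₀, the two-dimensional Lebesgue measure of ∪_{k ∈ ℤ²\{0}} ( {a ∈ 𝒞 : |ω(a)·k| ≤ γ̃‖k‖‖a‖^δ and ‖a‖^ε > ‖k‖} ) ∩ B_R is at most C₂ γ̃^{1/μ₀} R^{2 + 2ε − (M−δ)/μ₀}, where B_R is the closed ball of radius R centered at the origin in ℝ². -/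

import Mathlib

open Real MeasureTheory
open scoped RealInnerProductSpace ENNReal

noncomputable section

abbrev E2 := EuclideanSpace ℝ (Fin 2)

/-- The point of `ℝ²` (with the Euclidean norm) associated to an integer vector `k ∈ ℤ²`. -/
noncomputable def kv (k : Fin 2 → ℤ) : E2 :=
  EuclideanSpace.single 0 (k 0 : ℝ) + EuclideanSpace.single 1 (k 1 : ℝ)

/-- The unit vector `(cos φ, sin φ)` of `ℝ²`. -/
noncomputable def unitVec (φ : ℝ) : E2 :=
  EuclideanSpace.single 0 (Real.cos φ) + EuclideanSpace.single 1 (Real.sin φ)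

/-- The cone over the arc `{(cos φ, sin φ) : φ ∈ [φa, φb]}`. -/
def coneOf (φa φb : ℝ) : Set E2 :=
  {a | ∃ ρ : ℝ, 0 < ρ ∧ ∃ φ ∈ Set.Icc φa φb, a = ρ • unitVec φ}

/- ### Auxiliary lemmas -/

lemma kv_apply (k : Fin 2 → ℤ) (i : Fin 2) : kv k i = (k i : ℝ) := by
  fin_cases i <;> simp [kv, EuclideanSpace.single_apply]

lemma unitVec_apply0 (φ : ℝ) : unitVec φ 0 = Real.cos φ := by
  simp [unitVec, EuclideanSpace.single_apply]
lemma unitVec_apply1 (φ : ℝ) : unitVec φ 1 = Real.sin φ := by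
  simp [unitVec, EuclideanSpace.single_apply]

lemma norm_unitVec (φ : ℝ) : ‖unitVec φ‖ = 1 := by
  rw [EuclideanSpace.norm_eq]
  simp [Fin.sum_univ_two, unitVec_apply0, unitVec_apply1, sq_abs,
    Real.cos_sq_add_sin_sq]

lemma abs_le_norm_kv (k : Fin 2 → ℤ) (i : Fin 2) : |(k i : ℝ)| ≤ ‖kv k‖ := by
  rw [EuclideanSpace.norm_eq]
  rw [← Real.sqrt_sq_eq_abs]
  apply Real.sqrt_le_sqrt
  calc (k i : ℝ)^2 = ‖kv k i‖^2 := by rw [kv_apply]; simp [sq_abs]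
  _ ≤ ∑ j, ‖kv k j‖^2 := Finset.single_le_sum (f := fun j => ‖kv k j‖^2)
      (fun j _ => by positivity) (Finset.mem_univ i)

lemma one_le_norm_kv (k : Fin 2 → ℤ) (hk : k ≠ 0) : 1 ≤ ‖kv k‖ := by
  obtain ⟨i, hi⟩ := Function.ne_iff.mp hk
  refine le_trans ?_ (abs_le_norm_kv k i)
  rw [← Int.cast_abs]
  exact_mod_cast Int.one_le_abs (by simpa using hi)

noncomputable def uv' (φ : ℝ) : E2 :=
  EuclideanSpace.single 0 (-Real.sin φ) + EuclideanSpace.single 1 (Real.cos φ)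

lemma unitVec_eq (φ : ℝ) : unitVec φ = Real.cos φ • EuclideanSpace.single (0:Fin 2) (1:ℝ)
    + Real.sin φ • EuclideanSpace.single 1 1 := by
  ext i; fin_cases i <;>
    simp [unitVec, EuclideanSpace.single_apply, PiLp.add_apply, PiLp.smul_apply]

lemma uv'_eq (φ : ℝ) : uv' φ = (-Real.sin φ) • EuclideanSpace.single (0:Fin 2) (1:ℝ)
    + Real.cos φ • EuclideanSpace.single 1 1 := by
  ext i; fin_cases i <;>
    simp [uv', EuclideanSpace.single_apply, PiLp.add_apply, PiLp.smul_apply]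

lemma hasDerivAt_unitVec (φ : ℝ) : HasDerivAt unitVec (uv' φ) φ := by
  have h0 : HasDerivAt (fun t => Real.cos t • EuclideanSpace.single (0:Fin 2) (1:ℝ))
      ((-Real.sin φ) • EuclideanSpace.single (0:Fin 2) (1:ℝ)) φ :=
    (Real.hasDerivAt_cos φ).smul_const _
  have h1 : HasDerivAt (fun t => Real.sin t • EuclideanSpace.single (1:Fin 2) (1:ℝ))
      (Real.cos φ • EuclideanSpace.single (1:Fin 2) (1:ℝ)) φ :=
    (Real.hasDerivAt_sin φ).smul_const _
  have := h0.add h1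
  simp only [← unitVec_eq, ← uv'_eq] at this
  exact this.congr_of_eventuallyEq (Filter.Eventually.of_forall fun t => by rw [unitVec_eq]; rfl)

/-- the polar-coordinates map `(ρ, φ) ↦ ρ • unitVec φ`, as a self-map of `E2`. -/
noncomputable def Fmap : E2 → E2 := fun x => x 0 • unitVec (x 1)

noncomputable def Lmap (x : E2) : E2 →L[ℝ] E2 :=
  x 0 • ((ContinuousLinearMap.smulRight (1 : ℝ →L[ℝ] ℝ) (uv' (x 1))).comp
      (EuclideanSpace.proj (1 : Fin 2)))
  + (EuclideanSpace.proj (0 : Fin 2)).smulRight (unitVec (x 1))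

lemma hasFDerivAt_Fmap (x : E2) : HasFDerivAt Fmap (Lmap x) x := by
  have hc : HasFDerivAt (fun y : E2 => (y 0 : ℝ))
      ((EuclideanSpace.proj (0:Fin 2)) : E2 →L[ℝ] ℝ) x :=
    by
      have h := (EuclideanSpace.proj (0:Fin 2) : E2 →L[ℝ] ℝ).hasFDerivAt (x := x)
      simpa [PiLp.proj_apply] using h
  have hφ : HasFDerivAt (fun y : E2 => (y 1 : ℝ))
      ((EuclideanSpace.proj (1:Fin 2)) : E2 →L[ℝ] ℝ) x :=
    by
      have h := (EuclideanSpace.proj (1:Fin 2) : E2 →L[ℝ] ℝ).hasFDerivAt (x := x)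
      simpa [PiLp.proj_apply] using h
  have hu : HasFDerivAt (fun y : E2 => unitVec (y 1))
      ((ContinuousLinearMap.smulRight (1 : ℝ →L[ℝ] ℝ) (uv' (x 1))).comp
        (EuclideanSpace.proj (1 : Fin 2))) x :=
    by have h := ((hasDerivAt_unitVec (x 1)).hasFDerivAt).comp x hφ; exact h
  exact hc.smul hu

lemma det_Lmap (x : E2) : (Lmap x).det = x 0 := by
  classical
  set b := (EuclideanSpace.basisFun (Fin 2) ℝ).toBasis with hb
  have : (Lmap x).det = LinearMap.det ((Lmap x) : E2 →ₗ[ℝ] E2) := rfl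
  rw [this, ← LinearMap.det_toMatrix b, Matrix.det_fin_two]
  simp only [LinearMap.toMatrix_apply, hb, OrthonormalBasis.coe_toBasis,
    OrthonormalBasis.coe_toBasis_repr_apply, EuclideanSpace.basisFun_apply,
    EuclideanSpace.basisFun_repr, ContinuousLinearMap.coe_coe, Lmap,
    ContinuousLinearMap.add_apply, ContinuousLinearMap.smul_apply,
    ContinuousLinearMap.coe_comp', Function.comp_apply,
    ContinuousLinearMap.smulRight_apply, ContinuousLinearMap.one_apply,
    PiLp.proj_apply, PiLp.add_apply, PiLp.smul_apply, unitVec, uv',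
    EuclideanSpace.single_apply, smul_eq_mul]
  norm_num
  linear_combination (x 0) * Real.sin_sq_add_cos_sq (x 1)

/-- the coordinate measurable equivalence `E2 ≃ ℝ × ℝ` -/
noncomputable def qE : E2 ≃ᵐ ℝ × ℝ :=
  (MeasurableEquiv.toLp 2 (Fin 2 → ℝ)).symm.trans MeasurableEquiv.finTwoArrow

lemma qE_apply (x : E2) : qE x = (x 0, x 1) := rfl

lemma qE_mp : MeasurePreserving qE volume volume :=
  (MeasureTheory.volume_preserving_finTwoArrow ℝ).comp
    (EuclideanSpace.volume_preserving_symm_measurableEquiv_toLp (Fin 2))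

/-- The basic geometric estimate: the image under the polar-coordinates map of
`[c,d] × B` has measure at most `d * (d - c) * vol B`. -/
lemma vol_image_le (c d : ℝ) (hc : 0 ≤ c) (B : Set ℝ) (hB : MeasurableSet B) :
    volume (Fmap '' (qE ⁻¹' (Set.Icc c d ×ˢ B)))
      ≤ ENNReal.ofReal d * (ENNReal.ofReal (d - c) * volume B) := by
  classical
  set S : Set E2 := qE ⁻¹' (Set.Icc c d ×ˢ B) with hS
  have hSm : MeasurableSet S := qE.measurable (measurableSet_Icc.prod hB)
  have h1 : volume (Fmap '' S) ≤ ∫⁻ x in S, ENNReal.ofReal |(Lmap x).det| :=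
    MeasureTheory.addHaar_image_le_lintegral_abs_det_fderiv volume hSm
      (fun x _ => (hasFDerivAt_Fmap x).hasFDerivWithinAt)
  have h2 : ∫⁻ x in S, ENNReal.ofReal |(Lmap x).det| ≤ ∫⁻ _ in S, ENNReal.ofReal d := by
    refine setLIntegral_mono' hSm (fun x hx => ?_)
    have hx' : (x 0, x 1) ∈ Set.Icc c d ×ˢ B := hx
    have hx0 : x 0 ∈ Set.Icc c d := hx'.1
    rw [det_Lmap x]
    exact ENNReal.ofReal_le_ofReal (by rw [abs_of_nonneg (hc.trans hx0.1)]; exact hx0.2)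
  have h3 : ∫⁻ _ in S, ENNReal.ofReal d ∂volume = ENNReal.ofReal d * volume S := by
    simp [lintegral_const]
  have h4 : volume S = ENNReal.ofReal (d - c) * volume B := by
    rw [hS, qE_mp.measure_preimage ((measurableSet_Icc.prod hB).nullMeasurableSet),
      Measure.volume_eq_prod, Measure.prod_prod, Real.volume_Icc]
  calc volume (Fmap '' S) ≤ _ := h1
    _ ≤ _ := h2
    _ = _ := by rw [h3, h4]

lemma card_K (N : ℝ) (hN : 1 ≤ N) :
    ((Fintype.piFinset (fun _ : Fin 2 => Finset.Icc (-⌊N⌋) ⌊N⌋)).card : ℝ) ≤ 9 * N^2 := by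
  rw [Fintype.card_piFinset]
  rw [Finset.prod_const, Finset.card_univ, Fintype.card_fin]
  have h1 : (1:ℤ) ≤ ⌊N⌋ := by exact_mod_cast Int.le_floor.mpr (by simpa using hN)
  have hcard : (Finset.Icc (-⌊N⌋) ⌊N⌋).card = (2*⌊N⌋+1).toNat := by
    rw [Int.card_Icc]; congr 1; ring
  rw [hcard]
  have h3 : ((⌊N⌋ : ℝ)) ≤ N := Int.floor_le N
  have h2 : (((2*⌊N⌋+1).toNat : ℕ) : ℝ) = 2*(⌊N⌋:ℝ)+1 := by
    have : ((2*⌊N⌋+1).toNat : ℤ) = 2*⌊N⌋+1 := Int.toNat_of_nonneg (by omega)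
    exact_mod_cast congrArg (fun z : ℤ => (z : ℝ)) this
  push_cast [h2]
  have h4 : 2*(⌊N⌋:ℝ)+1 ≤ 3*N := by linarith
  calc (2*(⌊N⌋:ℝ)+1)^2 ≤ (3*N)^2 := by
        apply pow_le_pow_left₀ (by exact_mod_cast by linarith : (0:ℝ) ≤ 2*(⌊N⌋:ℝ)+1) h4
    _ = 9*N^2 := by ring

lemma term_eq (δ M ε γt C₁ u : ℝ) (hγ : 0 < γt) (j : ℕ) :
    9 * ((2:ℝ) ^ (((j:ℝ)+1)*ε))^2 *
      ((2:ℝ)^(j+1) * ((2:ℝ)^j * (C₁ * (γt * ((2:ℝ)^j) ^ (δ - M)) ^ u)))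
    = (18 * (2:ℝ)^(2*ε) * C₁) * γt ^ u * ((2:ℝ) ^ (2 + 2*ε + (δ - M)*u)) ^ j := by
  have h2 : (0:ℝ) < 2 := by norm_num
  have hmul : (γt * ((2:ℝ)^j) ^ (δ - M)) ^ u
      = γt ^ u * ((2:ℝ) ^ ((j:ℝ))) ^ ((δ - M) * u) := by
    have h : ((2:ℝ) ^ ((j:ℝ))) ^ ((δ - M) * u) = (((2:ℝ)^j) ^ (δ-M))^u := by
      rw [Real.rpow_mul (by positivity), Real.rpow_natCast]
    rw [Real.mul_rpow hγ.le (by positivity), h]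
  rw [hmul, ← Real.rpow_natCast 2 j, ← Real.rpow_natCast 2 (j+1),
    ← Real.rpow_natCast ((2:ℝ) ^ (2 + 2*ε + (δ - M)*u)) j,
    ← Real.rpow_natCast ((2:ℝ) ^ (((j:ℝ)+1)*ε)) 2,
    ← Real.rpow_mul h2.le, ← Real.rpow_mul h2.le, ← Real.rpow_mul h2.le]
  push_cast
  simp only [Real.rpow_def_of_pos h2]
  have key : rexp (Real.log 2 * ((↑j + 1) * ε * 2)) * (rexp (Real.log 2 * (↑j + 1)) *
        (rexp (Real.log 2 * ↑j) * rexp (Real.log 2 * (↑j * ((δ - M) * u)))))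
      = 2 * (rexp (Real.log 2 * (2 * ε)) *
        rexp (Real.log 2 * ((2 + 2 * ε + (δ - M) * u) * ↑j))) := by
    rw [← Real.exp_add, ← Real.exp_add, ← Real.exp_add, ← Real.exp_add,
      show Real.log 2 * ((↑j + 1) * ε * 2) + (Real.log 2 * (↑j + 1) +
        (Real.log 2 * ↑j + Real.log 2 * (↑j * ((δ - M) * u))))
        = (Real.log 2 * (2 * ε) + Real.log 2 * ((2 + 2 * ε + (δ - M) * u) * ↑j)) + Real.log 2
        from by ring,
      Real.exp_add, Real.exp_log h2]
    ring
  linear_combination (9 * C₁ * γt ^ u) * key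

lemma real_final (e A R : ℝ) (he : 0 < e) (hA : 0 ≤ A) (hR : 2 ≤ R) :
    ∑ j ∈ Finset.range (⌊Real.logb 2 R⌋₊ + 1), A * ((2:ℝ)^e)^j
      ≤ (A * (2:ℝ)^e / ((2:ℝ)^e - 1)) * R ^ e := by
  have h2 : (1:ℝ) < 2 := one_lt_two
  have hr : 1 < (2:ℝ)^e := by
    rw [Real.one_lt_rpow_iff_of_pos (by norm_num)]; exact Or.inl ⟨h2, he⟩
  set n := ⌊Real.logb 2 R⌋₊ + 1 with hn
  have hsum : ∑ j ∈ Finset.range n, A * ((2:ℝ)^e)^j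
      = A * ((((2:ℝ)^e)^n - 1) / ((2:ℝ)^e - 1)) := by
    rw [← Finset.mul_sum, geom_sum_eq hr.ne']
  rw [hsum]
  have hRpos : (0:ℝ) < R := by linarith
  have hfl : ((2:ℝ))^(⌊Real.logb 2 R⌋₊ : ℕ) ≤ R := by
    rw [← Real.rpow_natCast]
    calc (2:ℝ) ^ ((⌊Real.logb 2 R⌋₊ : ℕ) : ℝ) ≤ (2:ℝ) ^ (Real.logb 2 R) := by
          exact Real.rpow_le_rpow_of_exponent_le h2.le
            (Nat.floor_le (Real.logb_nonneg h2 (by linarith)))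
      _ = R := Real.rpow_logb (by norm_num) (by norm_num) hRpos
  have h2n : (2:ℝ)^(n:ℕ) ≤ 2 * R := by
    rw [hn, pow_succ]
    nlinarith [hfl]
  have hrn : (((2:ℝ)^e)^n : ℝ) ≤ (2*R)^e := by
    have h1 : (((2:ℝ)^e)^n : ℝ) = ((2:ℝ)^(n:ℕ)) ^ e := by
      rw [← Real.rpow_natCast ((2:ℝ)^e) n, ← Real.rpow_mul (by norm_num),
        ← Real.rpow_natCast 2 n, ← Real.rpow_mul (by norm_num), mul_comm]
    rw [h1]
    exact Real.rpow_le_rpow (by positivity) h2n he.le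
  have h2R : (2*R)^e = (2:ℝ)^e * R^e := Real.mul_rpow (by norm_num) hRpos.le
  have hden : (0:ℝ) < (2:ℝ)^e - 1 := by linarith
  have step : (((2:ℝ)^e)^n - 1) ≤ (2:ℝ)^e * R^e := by
    rw [← h2R]; linarith
  rw [div_eq_mul_inv, div_eq_mul_inv]
  calc A * ((((2:ℝ)^e)^n - 1) * ((2:ℝ)^e - 1)⁻¹)
      ≤ A * (((2:ℝ)^e * R^e) * ((2:ℝ)^e - 1)⁻¹) := by
        apply mul_le_mul_of_nonneg_left _ hA
        apply mul_le_mul_of_nonneg_right step (by positivity)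
    _ = A * (2:ℝ)^e * ((2:ℝ)^e - 1)⁻¹ * R^e := by ring

/-- Measure estimate for the union of the resonant zones intersected with a ball:
from a Rüssmann-type estimate on the unit circle one deduces the bound
`C₂ γ̃^{1/μ₀} R^{2+2ε−(M−δ)/μ₀}` for the measure in `B_R`. -/
theorem stmt14 (M δ ε γt : ℝ) (hδ0 : 0 ≤ δ) (hδM : δ < M) (hε : 0 < ε) (hγ : 0 < γt)
    (μ₀ : ℕ) (hμ₀ : 1 ≤ μ₀) (hexp : 0 < 2 + 2 * ε - (M - δ) / (μ₀ : ℝ))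
    (φa φb : ℝ) (hJ : φa ≤ φb)
    (ω : E2 → E2)
    (hhom : ∀ c : ℝ, 0 < c → ∀ a ∈ coneOf φa φb, ω (c • a) = c ^ M • ω a)
    (C₁ : ℝ) (hC₁ : 0 < C₁)
    (hmeas : ∀ k : Fin 2 → ℤ, k ≠ 0 → ∀ γ' : ℝ, 0 < γ' →
      volume {φ ∈ Set.Icc φa φb | |⟪ω (unitVec φ), kv k⟫| ≤ γ' * ‖kv k‖}
        ≤ ENNReal.ofReal (C₁ * γ' ^ (1 / (μ₀ : ℝ)))) :
    ∃ C₂ : ℝ, 0 < C₂ ∧ ∃ R₀ : ℝ, 1 < R₀ ∧ ∀ R : ℝ, R₀ ≤ R →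
      volume ((⋃ (k : Fin 2 → ℤ) (_ : k ≠ 0),
          {a ∈ coneOf φa φb |
            |⟪ω a, kv k⟫| ≤ γt * ‖kv k‖ * ‖a‖ ^ δ ∧ ‖kv k‖ < ‖a‖ ^ ε})
          ∩ Metric.closedBall (0 : E2) R)
        ≤ ENNReal.ofReal
            (C₂ * γt ^ (1 / (μ₀ : ℝ)) * R ^ (2 + 2 * ε - (M - δ) / (μ₀ : ℝ))) := by
  classical
  have hμpos : (0:ℝ) < (μ₀:ℝ) := by exact_mod_cast Nat.pos_of_ne_zero (by omega)
  set u : ℝ := 1 / (μ₀:ℝ) with hu_def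
  have hu : 0 < u := by positivity
  set e : ℝ := 2 + 2*ε + (δ - M)*u with he_def
  have hee : 2 + 2 * ε - (M - δ) / (μ₀ : ℝ) = e := by rw [he_def, hu_def]; ring
  have he : 0 < e := by rw [← hee]; exact hexp
  have hr1 : 1 < (2:ℝ)^e := by
    rw [Real.one_lt_rpow_iff_of_pos (by norm_num)]; exact Or.inl ⟨one_lt_two, he⟩
  have hC₂pos : 0 < 18 * (2:ℝ)^(2*ε) * C₁ * (2:ℝ)^e / ((2:ℝ)^e - 1) := by
    apply div_pos (by positivity) (by linarith)
  refine ⟨18 * (2:ℝ)^(2*ε) * C₁ * (2:ℝ)^e / ((2:ℝ)^e - 1), hC₂pos, 2, one_lt_two,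
    fun R hR => ?_⟩
  rw [hee]
  set n := ⌊Real.logb 2 R⌋₊ + 1 with hn
  set Bad : (Fin 2 → ℤ) → ℕ → Set ℝ := fun k j =>
    {φ ∈ Set.Icc φa φb |
      |⟪ω (unitVec φ), kv k⟫| ≤ (γt * ((2:ℝ)^j) ^ (δ - M)) * ‖kv k‖} with hBad
  set Cov : (Fin 2 → ℤ) → ℕ → Set E2 := fun k j =>
    Fmap '' (qE ⁻¹' (Set.Icc ((2:ℝ)^j) ((2:ℝ)^(j+1)) ×ˢ
      toMeasurable volume (Bad k j))) with hCov
  set K : ℕ → Finset (Fin 2 → ℤ) := fun j =>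
    (Fintype.piFinset (fun _ : Fin 2 =>
      Finset.Icc (-⌊(2:ℝ)^(((j:ℝ)+1)*ε)⌋ : ℤ) ⌊(2:ℝ)^(((j:ℝ)+1)*ε)⌋)).erase 0 with hK
  -- the covering inclusion
  have hincl : (⋃ (k : Fin 2 → ℤ) (_ : k ≠ 0),
          {a ∈ coneOf φa φb |
            |⟪ω a, kv k⟫| ≤ γt * ‖kv k‖ * ‖a‖ ^ δ ∧ ‖kv k‖ < ‖a‖ ^ ε})
          ∩ Metric.closedBall (0 : E2) R
      ⊆ ⋃ j ∈ Finset.range n, ⋃ k ∈ K j, Cov k j := by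
    rintro a ⟨ha, hball⟩
    simp only [Set.mem_iUnion] at ha
    obtain ⟨k, hk, hcone, h1, h2⟩ := ha
    obtain ⟨ρ, hρ, φ, hφ, rfl⟩ := hcone
    have hna : ‖ρ • unitVec φ‖ = ρ := by
      rw [norm_smul, norm_unitVec, Real.norm_eq_abs, abs_of_pos hρ, mul_one]
    rw [hna] at h1 h2
    have hkv1 : 1 ≤ ‖kv k‖ := one_le_norm_kv k hk
    have hρε1 : 1 < ρ ^ ε := lt_of_le_of_lt hkv1 h2
    have hρ1 : 1 < ρ := by
      rcases (Real.one_lt_rpow_iff_of_pos hρ).mp hρε1 with h | h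
      · exact h.1
      · linarith [h.2]
    have hρR : ρ ≤ R := by
      have := Metric.mem_closedBall.mp hball
      rw [dist_zero_right, hna] at this
      exact this
    set j := ⌊Real.logb 2 ρ⌋₊ with hj
    have hlogρ : 0 ≤ Real.logb 2 ρ := Real.logb_nonneg one_lt_two hρ1.le
    have hjl : (2:ℝ)^(j:ℕ) ≤ ρ := by
      rw [← Real.rpow_natCast]
      calc (2:ℝ) ^ ((j:ℕ) : ℝ) ≤ (2:ℝ) ^ (Real.logb 2 ρ) :=
          Real.rpow_le_rpow_of_exponent_le one_le_two (Nat.floor_le hlogρ)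
        _ = ρ := Real.rpow_logb (by norm_num) (by norm_num) (by linarith)
    have hjr : ρ < (2:ℝ)^(j+1 : ℕ) := by
      rw [← Real.rpow_natCast]
      calc ρ = (2:ℝ) ^ (Real.logb 2 ρ) :=
          (Real.rpow_logb (by norm_num) (by norm_num) (by linarith)).symm
        _ < (2:ℝ) ^ (((j+1 : ℕ)) : ℝ) := by
          apply Real.rpow_lt_rpow_of_exponent_lt one_lt_two
          push_cast
          exact Nat.lt_floor_add_one _
    have hjn : j ∈ Finset.range n := by
      rw [Finset.mem_range, hn]
      have hmono : Real.logb 2 ρ ≤ Real.logb 2 R :=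
        Real.logb_le_logb_of_le one_lt_two (by linarith) hρR
      have := Nat.floor_le_floor (R := ℝ) hmono
      omega
    -- k ∈ K j
    have hNge1 : (1:ℝ) ≤ (2:ℝ)^(((j:ℝ)+1)*ε) :=
      Real.one_le_rpow one_le_two (by positivity)
    have hρεN : ρ ^ ε < (2:ℝ)^(((j:ℝ)+1)*ε) := by
      calc ρ ^ ε < ((2:ℝ)^(j+1 : ℕ)) ^ ε := Real.rpow_lt_rpow (by linarith) hjr hε
        _ = (2:ℝ)^(((j:ℝ)+1)*ε) := by
          rw [← Real.rpow_natCast 2 (j+1), ← Real.rpow_mul (by norm_num)]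
          push_cast
          ring_nf
    have hkK : k ∈ K j := by
      rw [hK]
      refine Finset.mem_erase.mpr ⟨hk, Fintype.mem_piFinset.mpr (fun i => ?_)⟩
      have habs : |(k i : ℝ)| ≤ (2:ℝ)^(((j:ℝ)+1)*ε) :=
        le_of_lt (lt_of_le_of_lt (le_trans (abs_le_norm_kv k i) h2.le) hρεN)
      rw [Finset.mem_Icc]
      constructor
      · rw [neg_le]
        exact Int.le_floor.mpr (by
          have := (abs_le.mp habs).1
          push_cast
          linarith)
      · exact Int.le_floor.mpr (by
          have := (abs_le.mp habs).2
          push_cast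
          linarith)
    -- the key inequality on the unit circle
    have hcone1 : unitVec φ ∈ coneOf φa φb := ⟨1, one_pos, φ, hφ, (one_smul _ _).symm⟩
    have hωa : ω (ρ • unitVec φ) = ρ ^ M • ω (unitVec φ) := hhom ρ hρ _ hcone1
    have hρM : (0:ℝ) < ρ ^ M := Real.rpow_pos_of_pos hρ M
    rw [hωa, real_inner_smul_left, abs_mul, abs_of_pos hρM] at h1
    have hδeq : ρ ^ δ = ρ ^ (δ - M) * ρ ^ M := by
      rw [← Real.rpow_add hρ]; ring_nf
    have hz : |⟪ω (unitVec φ), kv k⟫| ≤ γt * ‖kv k‖ * ρ ^ (δ - M) := by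
      have h1' : ρ ^ M * |⟪ω (unitVec φ), kv k⟫|
          ≤ (γt * ‖kv k‖ * ρ ^ (δ - M)) * ρ ^ M := by
        rw [hδeq] at h1; linarith
      exact le_of_mul_le_mul_right (by linarith) hρM
    have hmono2 : ρ ^ (δ - M) ≤ ((2:ℝ)^(j:ℕ)) ^ (δ - M) :=
      Real.rpow_le_rpow_of_nonpos (by positivity) hjl (by linarith)
    have hkey : |⟪ω (unitVec φ), kv k⟫| ≤ (γt * ((2:ℝ)^(j:ℕ)) ^ (δ - M)) * ‖kv k‖ := by
      calc |⟪ω (unitVec φ), kv k⟫| ≤ γt * ‖kv k‖ * ρ ^ (δ - M) := hz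
        _ ≤ γt * ‖kv k‖ * ((2:ℝ)^(j:ℕ)) ^ (δ - M) := by
          apply mul_le_mul_of_nonneg_left hmono2 (by positivity)
        _ = (γt * ((2:ℝ)^(j:ℕ)) ^ (δ - M)) * ‖kv k‖ := by ring
    -- assemble membership
    simp only [Set.mem_iUnion]
    refine ⟨j, hjn, k, hkK, ?_⟩
    rw [hCov]
    refine ⟨(WithLp.equiv 2 (Fin 2 → ℝ)).symm ![ρ, φ], ?_, ?_⟩
    · have hq : qE ((WithLp.equiv 2 (Fin 2 → ℝ)).symm ![ρ, φ]) = (ρ, φ) := by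
        rw [qE_apply]
        simp [WithLp.equiv_symm_apply]
      simp only [Set.mem_preimage]
      rw [hq]
      exact ⟨⟨hjl, hjr.le⟩, subset_toMeasurable _ _ ⟨hφ, hkey⟩⟩
    · show Fmap _ = _
      rw [Fmap]
      simp [WithLp.equiv_symm_apply]
  -- the per-cell measure bound
  have covb : ∀ j : ℕ, ∀ k ∈ K j, volume (Cov k j) ≤ ENNReal.ofReal
      ((2:ℝ)^(j+1) * ((2:ℝ)^j * (C₁ * (γt * ((2:ℝ)^j) ^ (δ - M)) ^ u))) := by
    intro j k hkK
    have hk0 : k ≠ 0 := (Finset.mem_erase.mp (by rw [hK] at hkK; exact hkK)).1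
    have hγ' : (0:ℝ) < γt * ((2:ℝ)^j) ^ (δ - M) := by positivity
    have hb : volume (Bad k j) ≤ ENNReal.ofReal
        (C₁ * (γt * ((2:ℝ)^j) ^ (δ - M)) ^ u) := hmeas k hk0 _ hγ'
    have h := vol_image_le ((2:ℝ)^j) ((2:ℝ)^(j+1)) (by positivity)
      (toMeasurable volume (Bad k j)) (measurableSet_toMeasurable _ _)
    rw [measure_toMeasurable] at h
    calc volume (Cov k j) ≤ ENNReal.ofReal ((2:ℝ)^(j+1)) *
          (ENNReal.ofReal ((2:ℝ)^(j+1) - (2:ℝ)^j) * volume (Bad k j)) := h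
      _ ≤ ENNReal.ofReal ((2:ℝ)^(j+1)) * (ENNReal.ofReal ((2:ℝ)^j) *
          ENNReal.ofReal (C₁ * (γt * ((2:ℝ)^j) ^ (δ - M)) ^ u)) := by
          rw [show ((2:ℝ)^(j+1) - (2:ℝ)^j) = (2:ℝ)^j from by ring]
          exact mul_le_mul_right (mul_le_mul_right hb _) _
      _ = ENNReal.ofReal
          ((2:ℝ)^(j+1) * ((2:ℝ)^j * (C₁ * (γt * ((2:ℝ)^j) ^ (δ - M)) ^ u))) := by
          rw [← ENNReal.ofReal_mul (by positivity), ← ENNReal.ofReal_mul (by positivity)]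
  -- counting
  have hcard : ∀ j : ℕ, ((K j).card : ℝ) ≤ 9 * ((2:ℝ)^(((j:ℝ)+1)*ε))^2 := by
    intro j
    have h1 : (K j).card ≤ (Fintype.piFinset (fun _ : Fin 2 =>
        Finset.Icc (-⌊(2:ℝ)^(((j:ℝ)+1)*ε)⌋ : ℤ) ⌊(2:ℝ)^(((j:ℝ)+1)*ε)⌋)).card := by
      rw [hK]; exact Finset.card_erase_le
    calc ((K j).card : ℝ) ≤ _ := by exact_mod_cast h1
      _ ≤ 9 * ((2:ℝ)^(((j:ℝ)+1)*ε))^2 :=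
        card_K _ (Real.one_le_rpow one_le_two (by positivity))
  -- put everything together
  calc volume ((⋃ (k : Fin 2 → ℤ) (_ : k ≠ 0),
          {a ∈ coneOf φa φb |
            |⟪ω a, kv k⟫| ≤ γt * ‖kv k‖ * ‖a‖ ^ δ ∧ ‖kv k‖ < ‖a‖ ^ ε})
          ∩ Metric.closedBall (0 : E2) R)
      ≤ volume (⋃ j ∈ Finset.range n, ⋃ k ∈ K j, Cov k j) := measure_mono hincl
    _ ≤ ∑ j ∈ Finset.range n, volume (⋃ k ∈ K j, Cov k j) :=
        measure_biUnion_finset_le _ _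
    _ ≤ ∑ j ∈ Finset.range n, ∑ k ∈ K j, volume (Cov k j) :=
        Finset.sum_le_sum (fun j _ => measure_biUnion_finset_le _ _)
    _ ≤ ∑ j ∈ Finset.range n, ∑ _k ∈ K j, ENNReal.ofReal
          ((2:ℝ)^(j+1) * ((2:ℝ)^j * (C₁ * (γt * ((2:ℝ)^j) ^ (δ - M)) ^ u))) :=
        Finset.sum_le_sum (fun j _ => Finset.sum_le_sum (fun k hk => covb j k hk))
    _ ≤ ∑ j ∈ Finset.range n, ENNReal.ofReal
          (9 * ((2:ℝ)^(((j:ℝ)+1)*ε))^2 *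
            ((2:ℝ)^(j+1) * ((2:ℝ)^j * (C₁ * (γt * ((2:ℝ)^j) ^ (δ - M)) ^ u)))) := by
        refine Finset.sum_le_sum (fun j _ => ?_)
        rw [Finset.sum_const, nsmul_eq_mul]
        have h1 : ((K j).card : ℝ≥0∞) ≤ ENNReal.ofReal (9 * ((2:ℝ)^(((j:ℝ)+1)*ε))^2) := by
          rw [← ENNReal.ofReal_natCast]
          exact ENNReal.ofReal_le_ofReal (hcard j)
        calc ((K j).card : ℝ≥0∞) * ENNReal.ofReal
              ((2:ℝ)^(j+1) * ((2:ℝ)^j * (C₁ * (γt * ((2:ℝ)^j) ^ (δ - M)) ^ u)))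
            ≤ ENNReal.ofReal (9 * ((2:ℝ)^(((j:ℝ)+1)*ε))^2) * ENNReal.ofReal
              ((2:ℝ)^(j+1) * ((2:ℝ)^j * (C₁ * (γt * ((2:ℝ)^j) ^ (δ - M)) ^ u))) :=
            mul_le_mul_left h1 _
          _ = ENNReal.ofReal (9 * ((2:ℝ)^(((j:ℝ)+1)*ε))^2 *
              ((2:ℝ)^(j+1) * ((2:ℝ)^j * (C₁ * (γt * ((2:ℝ)^j) ^ (δ - M)) ^ u)))) := by
            rw [← ENNReal.ofReal_mul (by positivity)]
    _ = ENNReal.ofReal (∑ j ∈ Finset.range n,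
          9 * ((2:ℝ)^(((j:ℝ)+1)*ε))^2 *
            ((2:ℝ)^(j+1) * ((2:ℝ)^j * (C₁ * (γt * ((2:ℝ)^j) ^ (δ - M)) ^ u)))) :=
        (ENNReal.ofReal_sum_of_nonneg (fun j _ => by positivity)).symm
    _ ≤ ENNReal.ofReal (18 * (2:ℝ)^(2*ε) * C₁ * (2:ℝ)^e / ((2:ℝ)^e - 1) * γt ^ u * R ^ e) := by
        apply ENNReal.ofReal_le_ofReal
        have hterms : ∀ j ∈ Finset.range n,
            9 * ((2:ℝ)^(((j:ℝ)+1)*ε))^2 *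
              ((2:ℝ)^(j+1) * ((2:ℝ)^j * (C₁ * (γt * ((2:ℝ)^j) ^ (δ - M)) ^ u)))
            = (18 * (2:ℝ)^(2*ε) * C₁ * γt ^ u) * ((2:ℝ)^e)^j := by
          intro j _
          rw [he_def, term_eq δ M ε γt C₁ u hγ j]
          try ring
        rw [Finset.sum_congr rfl hterms]
        have := real_final e (18 * (2:ℝ)^(2*ε) * C₁ * γt ^ u) R he (by positivity) hR
        calc ∑ j ∈ Finset.range n, (18 * (2:ℝ)^(2*ε) * C₁ * γt ^ u) * ((2:ℝ)^e)^j
            ≤ (18 * (2:ℝ)^(2*ε) * C₁ * γt ^ u) * (2:ℝ)^e / ((2:ℝ)^e - 1) * R ^ e :=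
              this
          _ = 18 * (2:ℝ)^(2*ε) * C₁ * (2:ℝ)^e / ((2:ℝ)^e - 1) * γt ^ u * R ^ e := by
              ring
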